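/- arXiv:2012.14519 — 2 statements merged into one kernel-verified Lean document; each statement's English description precedes it below -/
import Mathlib

section
/- Let G, Γ be groupoids, ρ : G → Γ a groupoid homomorphism, and form the semi-direct product (G×_ρΓ)⋊Γ for the right action (g,γ)·γ' = (g,γ'⁻¹γ) of Γ on the skew product G×_ρΓ; its elements are triples (g,γ,γ') with (γ,ρ(g)) composable and t(γ') = t(γ). Then the maps φ : (G×_ρΓ)⋊Γ → G, φ(g,γ,γ') = g, and ψ : G → (G×_ρΓ)⋊Γ, ψ(g) = (g, ρ(t(g)), ρ(g)), are groupoid homomorphisms with φ∘ψ = id_G, and the function θ(u,γ) = (u, ρ(u), γ⁻¹) on the unit space G⁰∗Γ satisfies θ(t(x))·x = (ψ∘φ)(x)·θ(d(x)) for all x ∈ (G×_ρΓ)⋊Γ. Hence (G×_ρΓ)⋊Γ is similar to G. -/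
/-- A discrete groupoid: a set `α` with a (junk-totalized) partial multiplication,
inverse, domain map `d` and terminus map `t`.  A pair `(g, h)` is composable when
`d g = t h`; all axioms involving products are conditioned on composability. -/
structure DGroupoid (α : Type*) where
  mul : α → α → α
  inv : α → α
  d : α → α
  t : α → α
  inv_mul : ∀ g, mul (inv g) g = d g
  mul_inv : ∀ g, mul g (inv g) = t g
  mul_d_self : ∀ g, mul g (d g) = g
  t_mul_self : ∀ g, mul (t g) g = g
  d_inv : ∀ g, d (inv g) = t g
  t_inv : ∀ g, t (inv g) = d g
  inv_inv : ∀ g, inv (inv g) = g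
  d_mul : ∀ g h, d g = t h → d (mul g h) = d h
  t_mul : ∀ g h, d g = t h → t (mul g h) = t g
  mul_assoc : ∀ g h k, d g = t h → d h = t k → mul (mul g h) k = mul g (mul h k)
  d_d : ∀ g, d (d g) = d g
  t_d : ∀ g, t (d g) = d g
  d_t : ∀ g, d (t g) = t g
  t_t : ∀ g, t (t g) = t g

/-- `x` is a unit of the groupoid `G`, i.e. `x ∈ G⁰`. -/
def DGroupoid.IsUnit {α : Type*} (G : DGroupoid α) (x : α) : Prop :=
  G.d x = x ∧ G.t x = x

/-- A right action of the groupoid `G` on the groupoid `H`, with anchor map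
`p : H → G⁰`.  `act h g` represents `h · g`, which is meaningful when `t g = p h`. -/
structure RightAction {α β : Type*} (G : DGroupoid α) (H : DGroupoid β) where
  p : β → α
  p_unit : ∀ h, G.IsUnit (p h)
  act : β → α → β
  p_act : ∀ h g, G.t g = p h → p (act h g) = G.d g
  act_comp : ∀ h g₁ g₂, G.t g₁ = p h → G.d g₁ = G.t g₂ →
      act h (G.mul g₁ g₂) = act (act h g₁) g₂
  act_mul : ∀ h₁ h₂ g, H.d h₁ = H.t h₂ → G.t g = p (H.mul h₁ h₂) →
      G.t g = p h₁ ∧ G.t g = p h₂ ∧ H.d (act h₁ g) = H.t (act h₂ g) ∧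
        act (H.mul h₁ h₂) g = H.mul (act h₁ g) (act h₂ g)
  act_p : ∀ h, act h (p h) = h

/-- A homomorphism (functor) between discrete groupoids. -/
structure IsHom {α β : Type*} (G : DGroupoid α) (K : DGroupoid β) (f : α → β) : Prop where
  map_mul : ∀ g h, G.d g = G.t h → f (G.mul g h) = K.mul (f g) (f h)
  map_inv : ∀ g, f (G.inv g) = K.inv (f g)
  map_d : ∀ g, f (G.d g) = K.d (f g)
  map_t : ∀ g, f (G.t g) = K.t (f g)

section Statement8

variable {α γ : Type*} (G : DGroupoid α) (Γ : DGroupoid γ) (ρ : α → γ)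

/-- Membership in the semi-direct product `(G ×_ρ Γ) ⋊ Γ`, written on raw triples
`((g, γ), γ')`: `(γ, ρ g)` is composable and `t γ' = t γ` (the anchor of the right
action `(g, γ) · γ' = (g, γ'⁻¹ γ)` being `p (g, γ) = t γ`). -/
def sdMem (X : (α × γ) × γ) : Prop :=
  Γ.d X.1.2 = Γ.t (ρ X.1.1) ∧ Γ.t X.2 = Γ.t X.1.2

/-- Multiplication of `(G ×_ρ Γ) ⋊ Γ`:
`(g, γ, γ') (g', γ'⁻¹ γ ρ(g), γ'') = (g g', γ, γ' γ'')`. -/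
def sdMul (X Y : (α × γ) × γ) : (α × γ) × γ :=
  ((G.mul X.1.1 Y.1.1, X.1.2), Γ.mul X.2 Y.2)

/-- Inverse in `(G ×_ρ Γ) ⋊ Γ`: `(g, γ, γ')⁻¹ = (g⁻¹, γ'⁻¹ γ ρ(g), γ'⁻¹)`. -/
def sdInv (X : (α × γ) × γ) : (α × γ) × γ :=
  ((G.inv X.1.1, Γ.mul (Γ.mul (Γ.inv X.2) X.1.2) (ρ X.1.1)), Γ.inv X.2)

/-- Domain map of `(G ×_ρ Γ) ⋊ Γ`: `d (g, γ, γ') = (d g, γ'⁻¹ γ ρ(g), d γ')`. -/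
def sdD (X : (α × γ) × γ) : (α × γ) × γ :=
  ((G.d X.1.1, Γ.mul (Γ.mul (Γ.inv X.2) X.1.2) (ρ X.1.1)), Γ.d X.2)

/-- Terminus map of `(G ×_ρ Γ) ⋊ Γ`: `t (g, γ, γ') = (t g, γ, t γ')`. -/
def sdT (X : (α × γ) × γ) : (α × γ) × γ := ((G.t X.1.1, X.1.2), Γ.t X.2)

/-- Composability in `(G ×_ρ Γ) ⋊ Γ`: `d X = t Y`. -/
def sdCmp (X Y : (α × γ) × γ) : Prop := sdD G Γ ρ X = sdT G Γ Y

/-- The map `φ : (G ×_ρ Γ) ⋊ Γ → G`, `φ (g, γ, γ') = g`. -/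
def phiMap (X : (α × γ) × γ) : α := X.1.1

/-- The map `ψ : G → (G ×_ρ Γ) ⋊ Γ`, `ψ g = (g, ρ (t g), ρ g)`. -/
def psiMap (g : α) : (α × γ) × γ := ((g, ρ (G.t g)), ρ g)

/-- The function `θ : G⁰ ∗ Γ → (G ×_ρ Γ) ⋊ Γ`, `θ (u, γ) = (u, ρ u, γ⁻¹)`. -/
def thetaMap (x : α × γ) : (α × γ) × γ := ((x.1, ρ x.1), Γ.inv x.2)

lemma DGroupoid.inv_unique {α : Type*} (G : DGroupoid α) (c x : α)
    (hc : G.d c = G.t x) (hx : G.mul c x = G.t c) : x = G.inv c := by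
  have h1 : G.mul (G.mul (G.inv c) c) x = G.mul (G.inv c) (G.mul c x) :=
    G.mul_assoc _ _ _ (G.d_inv c) hc
  rw [G.inv_mul, hc, G.t_mul_self, hx] at h1
  rw [h1]
  have : G.d (G.inv c) = G.t c := G.d_inv c
  conv_lhs => rw [← this, G.mul_d_self]

lemma DGroupoid.inv_mul_rev {α : Type*} (G : DGroupoid α) (a b : α)
    (h : G.d a = G.t b) : G.inv (G.mul a b) = G.mul (G.inv b) (G.inv a) := by
  have hdb : G.d (G.inv b) = G.t (G.inv a) := by rw [G.d_inv, G.t_inv, h]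
  have hdc : G.d (G.mul a b) = G.t (G.mul (G.inv b) (G.inv a)) := by
    rw [G.d_mul _ _ h, G.t_mul _ _ hdb, G.t_inv]
  refine (G.inv_unique _ _ hdc ?_).symm
  have h1 : G.mul (G.mul a b) (G.mul (G.inv b) (G.inv a)) =
      G.mul a (G.mul b (G.mul (G.inv b) (G.inv a))) :=
    G.mul_assoc _ _ _ h (by rw [G.t_mul _ _ hdb, G.t_inv])
  have h2 : G.mul b (G.mul (G.inv b) (G.inv a)) =
      G.mul (G.mul b (G.inv b)) (G.inv a) :=
    (G.mul_assoc _ _ _ (by rw [G.t_inv]) hdb).symm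
  rw [h1, h2, G.mul_inv]
  have : G.t b = G.t (G.inv a) := by rw [G.t_inv, h]
  rw [this, G.t_mul_self, G.mul_inv, G.t_mul _ _ h]

/-- Let `G, Γ` be groupoids, `ρ : G → Γ` a groupoid homomorphism,
and form the semi-direct product `(G ×_ρ Γ) ⋊ Γ` for the right action
`(g, γ) · γ' = (g, γ'⁻¹ γ)` of `Γ` on the skew product `G ×_ρ Γ`.  Then
`φ (g, γ, γ') = g` and `ψ g = (g, ρ (t g), ρ g)` are groupoid homomorphisms with
`φ ∘ ψ = id_G`, and the function `θ (u, γ) = (u, ρ u, γ⁻¹)` on the unit space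
`G⁰ ∗ Γ` satisfies `θ (t x) · x = (ψ ∘ φ) x · θ (d x)` for every
`x ∈ (G ×_ρ Γ) ⋊ Γ`.  Hence `(G ×_ρ Γ) ⋊ Γ` is similar to `G` (the direction
`φ ∘ ψ ∼ id_G` being witnessed by some `θ₀`). -/
theorem skew_semidirect_similar_to_G (hρ : IsHom G Γ ρ) :
    (∀ X Y, sdMem Γ ρ X → sdMem Γ ρ Y → sdCmp G Γ ρ X Y →
        phiMap (sdMul G Γ X Y) = G.mul (phiMap X) (phiMap Y)) ∧
    (∀ X, sdMem Γ ρ X →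
        phiMap (sdInv G Γ ρ X) = G.inv (phiMap X) ∧
        phiMap (sdD G Γ ρ X) = G.d (phiMap X) ∧
        phiMap (sdT G Γ X) = G.t (phiMap X)) ∧
    (∀ g : α, sdMem Γ ρ (psiMap G ρ g)) ∧
    (∀ g g' : α, G.d g = G.t g' →
        psiMap G ρ (G.mul g g') = sdMul G Γ (psiMap G ρ g) (psiMap G ρ g')) ∧
    (∀ g : α,
        psiMap G ρ (G.inv g) = sdInv G Γ ρ (psiMap G ρ g) ∧
        psiMap G ρ (G.d g) = sdD G Γ ρ (psiMap G ρ g) ∧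
        psiMap G ρ (G.t g) = sdT G Γ (psiMap G ρ g)) ∧
    (∀ g : α, phiMap (psiMap G ρ g) = g) ∧
    (∀ X, sdMem Γ ρ X →
        sdMul G Γ (thetaMap Γ ρ ((sdT G Γ X).1)) X =
          sdMul G Γ (psiMap G ρ (phiMap X)) (thetaMap Γ ρ ((sdD G Γ ρ X).1))) ∧
    (∃ θ₀ : α → α, ∀ g : α,
        G.mul (θ₀ (G.t g)) (phiMap (psiMap G ρ g)) = G.mul g (θ₀ (G.d g))) := by
  refine ⟨fun X Y _ _ _ => rfl, fun X _ => ⟨rfl, rfl, rfl⟩, ?_, ?_, ?_, fun g => rfl, ?_, ?_⟩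
  · intro g
    exact ⟨by simp only [psiMap]; rw [hρ.map_t, Γ.d_t],
      by simp only [psiMap]; rw [hρ.map_t, Γ.t_t]⟩
  · intro g g' h
    simp only [psiMap, sdMul, G.t_mul _ _ h, hρ.map_mul _ _ h]
  · intro g
    refine ⟨?_, ?_, ?_⟩
    · simp only [psiMap, sdInv, G.t_inv, hρ.map_inv]
      have h1 : Γ.mul (Γ.inv (ρ g)) (ρ (G.t g)) = Γ.inv (ρ g) := by
        rw [hρ.map_t, ← Γ.d_inv, Γ.mul_d_self]
      rw [hρ.map_d, h1, Γ.inv_mul]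
    · simp only [psiMap, sdD, G.t_d, hρ.map_d]
      have h1 : Γ.mul (Γ.inv (ρ g)) (ρ (G.t g)) = Γ.inv (ρ g) := by
        rw [hρ.map_t, ← Γ.d_inv, Γ.mul_d_self]
      rw [h1, Γ.inv_mul]
    · simp only [psiMap, sdT, G.t_t, hρ.map_t]
  · rintro ⟨⟨g, γ⟩, γ'⟩ ⟨h1, h2⟩
    dsimp only at h1 h2
    simp only [sdMul, sdT, sdD, thetaMap, psiMap, phiMap]
    have e1 : G.mul (G.t g) g = G.mul g (G.d g) := by rw [G.t_mul_self, G.mul_d_self]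
    have hdν : Γ.d (Γ.mul (Γ.inv γ') γ) = Γ.t (ρ g) := by
      rw [Γ.d_mul _ _ (by rw [Γ.d_inv, h2]), h1]
    have e2 : Γ.mul (Γ.inv γ) γ' =
        Γ.mul (ρ g) (Γ.inv (Γ.mul (Γ.mul (Γ.inv γ') γ) (ρ g))) := by
      rw [Γ.inv_mul_rev _ _ hdν, Γ.inv_mul_rev _ _ (by rw [Γ.d_inv, h2]), Γ.inv_inv]
      have h3 : Γ.mul (ρ g) (Γ.mul (Γ.inv (ρ g)) (Γ.mul (Γ.inv γ) γ')) =
          Γ.mul (Γ.mul (ρ g) (Γ.inv (ρ g))) (Γ.mul (Γ.inv γ) γ') := by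
        refine (Γ.mul_assoc _ _ _ (by rw [Γ.t_inv]) ?_).symm
        rw [Γ.d_inv, Γ.t_mul _ _ (by rw [Γ.d_inv, h2]), Γ.t_inv, h1]
      rw [h3, Γ.mul_inv]
      have h4 : Γ.t (ρ g) = Γ.t (Γ.mul (Γ.inv γ) γ') := by
        rw [Γ.t_mul _ _ (by rw [Γ.d_inv, h2]), Γ.t_inv, h1]
      rw [h4, Γ.t_mul_self]
    rw [e1, e2]
  · exact ⟨id, fun g => by simp only [phiMap, psiMap, id, G.t_mul_self, G.mul_d_self]⟩

end Statement8
end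

section
/- Let (G,E) be a pseudo free self-similar groupoid action on the path space of a finite directed graph E with no sources. If g₁, g₂ ∈ G and α ∈ E* satisfy d(g₁) = d(g₂) = r(α), g₁·α = g₂·α, and g₁|_α = g₂|_α, then g₁ = g₂. -/
attribute [local instance] Classical.propDecidable

/-- A directed graph `E = (E⁰, E¹, r, s)`. -/
structure DGraph where
  V : Type
  Edge : Type
  r : Edge → V
  s : Edge → V

/-- `E.chain v l w` says that the list of edges `l` forms a path with range `v`
and source `w`: consecutive edges satisfy `r e_{i+1} = s e_i`. -/
def DGraph.chain (E : DGraph) : E.V → List E.Edge → E.V → Prop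
  | v, [], w => v = w
  | v, e :: l, w => E.r e = v ∧ E.chain (E.s e) l w

theorem DGraph.chain_append (E : DGraph) :
    ∀ (l₁ : List E.Edge) (v w x : E.V) (l₂ : List E.Edge),
      E.chain v l₁ w → E.chain w l₂ x → E.chain v (l₁ ++ l₂) x := by
  intro l₁
  induction l₁ with
  | nil =>
      intro v w x l₂ h1 h2
      have hvw : v = w := h1
      rw [List.nil_append]
      exact hvw ▸ h2
  | cons e l ih =>
      intro v w x l₂ h1 h2
      have h1' : E.r e = v ∧ E.chain (E.s e) l w := h1
      exact ⟨h1'.1, ih _ _ _ _ h1'.2 h2⟩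

/-- A finite path in the graph `E`: a range vertex `r μ`, a compatible list of
edges, and a source vertex `s μ`.  Vertices are the paths with no edges. -/
structure Pth (E : DGraph) where
  rng : E.V
  edges : List E.Edge
  src : E.V
  ok : E.chain rng edges src

/-- The length-zero path at a vertex `v`. -/
def Pth.ofVertex {E : DGraph} (v : E.V) : Pth E := ⟨v, [], v, rfl⟩

/-- The length-one path given by an edge `e`. -/
def Pth.ofEdge {E : DGraph} (e : E.Edge) : Pth E :=
  ⟨E.r e, [e], E.s e, ⟨rfl, rfl⟩⟩

/-- Concatenation `μ ν` of paths (meaningful when `r ν = s μ`; junk otherwise). -/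
noncomputable def Pth.concat {E : DGraph} (μ ν : Pth E) : Pth E :=
  if h : ν.rng = μ.src then
    ⟨μ.rng, μ.edges ++ ν.edges, ν.src,
      E.chain_append μ.edges μ.rng μ.src ν.src ν.edges μ.ok (h ▸ ν.ok)⟩
  else μ

/-- A (discrete) groupoid with unit space `V`: `d` and `t` are the domain and
terminus maps, `unit v = id_v`, and a pair `(g, h)` is composable when `d g = t h`. -/
structure VGroupoid (V : Type) (α : Type*) where
  d : α → V
  t : α → V
  mul : α → α → α
  inv : α → α
  unit : V → α
  d_unit : ∀ v, d (unit v) = v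
  t_unit : ∀ v, t (unit v) = v
  d_inv : ∀ g, d (inv g) = t g
  t_inv : ∀ g, t (inv g) = d g
  d_mul : ∀ g h, d g = t h → d (mul g h) = d h
  t_mul : ∀ g h, d g = t h → t (mul g h) = t g
  mul_assoc : ∀ g h k, d g = t h → d h = t k → mul (mul g h) k = mul g (mul h k)
  unit_mul : ∀ g, mul (unit (t g)) g = g
  mul_unit : ∀ g, mul g (unit (d g)) = g
  inv_mul : ∀ g, mul (inv g) g = unit (d g)
  mul_inv : ∀ g, mul g (inv g) = unit (t g)
  inv_inv : ∀ g, inv (inv g) = g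

/-- A self-similar groupoid action `(G, E)` on the path space of the graph `E`:
a groupoid `G` with unit space `E⁰` together with a faithful action by partial
isomorphisms of the forest `T_E` — each `g ∈ G` maps `d(g) E*` bijectively onto
`t(g) E*` preserving path length, sending vertices to vertices and preserving the
edge relation of `T_E` — such that for every `g ∈ G` and every edge
`e ∈ d(g) E¹` there is a unique restriction `g|_e ∈ G` with
`g · (e μ) = (g · e)(g|_e · μ)` for all `μ ∈ s(e) E*`. -/
structure SelfSimilar (E : DGraph) (α : Type*) extends VGroupoid E.V α where
  act : α → Pth E → Pth E
  act_rng : ∀ g μ, μ.rng = d g → (act g μ).rng = t g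
  act_len : ∀ g μ, μ.rng = d g → (act g μ).edges.length = μ.edges.length
  act_vertex : ∀ g, act g (Pth.ofVertex (d g)) = Pth.ofVertex (t g)
  act_mul : ∀ g h μ, d g = t h → μ.rng = d h → act (mul g h) μ = act g (act h μ)
  act_unit : ∀ v μ, μ.rng = v → act (unit v) μ = μ
  act_surj : ∀ g ν, ν.rng = t g → ∃ μ, μ.rng = d g ∧ act g μ = ν
  act_edge : ∀ g μ e, μ.rng = d g → E.r e = μ.src →
      ∃ e' : E.Edge, act g (μ.concat (Pth.ofEdge e)) = (act g μ).concat (Pth.ofEdge e')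
  faithful : ∀ g₁ g₂, d g₁ = d g₂ → (∀ μ, μ.rng = d g₁ → act g₁ μ = act g₂ μ) → g₁ = g₂
  res : α → E.Edge → α
  res_d : ∀ g e, E.r e = d g → d (res g e) = E.s e
  res_spec : ∀ g e μ, E.r e = d g → μ.rng = E.s e →
      act g ((Pth.ofEdge e).concat μ) = (act g (Pth.ofEdge e)).concat (act (res g e) μ)
  res_unique : ∀ g e k, E.r e = d g → d k = E.s e →
      (∀ μ, μ.rng = E.s e →
        act g ((Pth.ofEdge e).concat μ) = (act g (Pth.ofEdge e)).concat (act k μ)) →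
      k = res g e

section PFHelpers

variable {E : DGraph} {α : Type*}

theorem chain_src' : ∀ (l : List E.Edge) (v w w' : E.V), E.chain v l w → E.chain v l w' → w = w'
  | [], _, _, _, h, h' => h.symm.trans h'
  | e :: l, _, w, w', h, h' => chain_src' l (E.s e) w w' h.2 h'.2

theorem pth_ext {μ ν : Pth E} (h1 : μ.rng = ν.rng) (h2 : μ.edges = ν.edges) : μ = ν := by
  obtain ⟨a, b, c, hc⟩ := μ
  obtain ⟨a', b', c', hc'⟩ := ν
  dsimp only at h1 h2
  subst h1; subst h2
  obtain rfl : c = c' := chain_src' b a c c' hc hc'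
  rfl

theorem concat_rng {μ ν : Pth E} (h : ν.rng = μ.src) : (μ.concat ν).rng = μ.rng := by
  simp only [Pth.concat, dif_pos h]

theorem concat_edges {μ ν : Pth E} (h : ν.rng = μ.src) :
    (μ.concat ν).edges = μ.edges ++ ν.edges := by
  simp only [Pth.concat, dif_pos h]

theorem concat_src {μ ν : Pth E} (h : ν.rng = μ.src) : (μ.concat ν).src = ν.src := by
  simp only [Pth.concat, dif_pos h]

theorem cond_of {μ ν : Pth E}
    (hlen : (μ.concat ν).edges.length = μ.edges.length + ν.edges.length)
    (hν : ν.edges ≠ []) : ν.rng = μ.src := by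
  by_contra hc
  simp only [Pth.concat, dif_neg hc] at hlen
  have h0 : ν.edges.length = 0 := by omega
  exact hν (List.length_eq_zero_iff.mp h0)

theorem vertex_concat {v : E.V} {ν : Pth E} (h : ν.rng = v) :
    (Pth.ofVertex v).concat ν = ν := by
  have h' : ν.rng = (Pth.ofVertex v).src := h
  exact pth_ext (by rw [concat_rng h']; exact h.symm) (by rw [concat_edges h']; rfl)

theorem concat_assoc {A B C : Pth E} (h1 : B.rng = A.src) (h2 : C.rng = B.src) :
    (A.concat B).concat C = A.concat (B.concat C) := by
  have hBC : (B.concat C).rng = A.src := by rw [concat_rng h2]; exact h1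
  have hC' : C.rng = (A.concat B).src := by rw [concat_src h1]; exact h2
  refine pth_ext ?_ ?_
  · rw [concat_rng hC', concat_rng h1, concat_rng hBC]
  · rw [concat_edges hC', concat_edges h1, concat_edges hBC, concat_edges h2,
      List.append_assoc]

theorem act_ofEdge (S : SelfSimilar E α) (g : α) (e : E.Edge) (h : E.r e = S.d g) :
    ∃ e', E.r e' = S.t g ∧ S.act g (Pth.ofEdge e) = Pth.ofEdge e' := by
  obtain ⟨e', he'⟩ := S.act_edge g (Pth.ofVertex (S.d g)) e rfl h
  rw [vertex_concat (ν := Pth.ofEdge e) (v := S.d g) h, S.act_vertex g] at he'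
  by_cases hc : (Pth.ofEdge e').rng = (Pth.ofVertex (S.t g)).src
  · exact ⟨e', hc, by rw [he', vertex_concat (ν := Pth.ofEdge e') (v := S.t g) hc]⟩
  · exfalso
    have hlen := S.act_len g (Pth.ofEdge e) h
    rw [he'] at hlen
    simp only [Pth.concat, dif_neg hc] at hlen
    simp [Pth.ofVertex, Pth.ofEdge] at hlen

theorem faithful_of_nonempty (S : SelfSimilar E α) (hns : ∀ v : E.V, ∃ e : E.Edge, E.r e = v)
    (g h : α) (hd : S.d g = S.d h)
    (hact : ∀ ν : Pth E, ν.rng = S.d g → ν.edges ≠ [] → S.act g ν = S.act h ν) : g = h := by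
  obtain ⟨e₀, he₀⟩ := hns (S.d g)
  have ht : S.t g = S.t h := by
    have h1 := S.act_rng g (Pth.ofEdge e₀) he₀
    have h2 := S.act_rng h (Pth.ofEdge e₀) (hd ▸ he₀)
    rw [← h1, ← h2, hact (Pth.ofEdge e₀) he₀ (by simp [Pth.ofEdge])]
  apply S.faithful g h hd
  intro ν hν
  by_cases hne : ν.edges = []
  · have hv : ν = Pth.ofVertex (S.d g) := pth_ext hν hne
    rw [hv, S.act_vertex, hd, S.act_vertex, ht]
  · exact hact ν hν hne

theorem edge_cancel (S : SelfSimilar E α)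
    (hpf : ∀ (g : α) (e : E.Edge), E.r e = S.d g →
        S.act g (Pth.ofEdge e) = Pth.ofEdge e → S.res g e = S.unit (E.s e) →
        g = S.unit (E.r e))
    (g₁ g₂ : α) (e : E.Edge) (h1 : E.r e = S.d g₁) (h2 : E.r e = S.d g₂)
    (hA : S.act g₁ (Pth.ofEdge e) = S.act g₂ (Pth.ofEdge e))
    (hR : S.res g₁ e = S.res g₂ e) : g₁ = g₂ := by
  have hArng1 : (Pth.ofEdge e).rng = S.d g₁ := h1
  have hArng2 : (Pth.ofEdge e).rng = S.d g₂ := h2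
  have ht : S.t g₁ = S.t g₂ := by
    rw [← S.act_rng g₁ (Pth.ofEdge e) hArng1, ← S.act_rng g₂ (Pth.ofEdge e) hArng2, hA]
  have hdi : S.d (S.inv g₂) = S.t g₁ := by rw [S.d_inv, ht]
  have hfix : ∀ ν : Pth E, ν.rng = S.d g₁ → S.act g₁ ν = S.act g₂ ν →
      S.act (S.mul (S.inv g₂) g₁) ν = ν := by
    intro ν hν heq
    have hν2 : ν.rng = S.d g₂ := hν.trans (h1.symm.trans h2)
    rw [S.act_mul _ _ _ hdi hν, heq, ← S.act_mul _ _ _ (S.d_inv g₂) hν2, S.inv_mul,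
      S.act_unit _ _ hν2]
  have hd₀ : S.d (S.mul (S.inv g₂) g₁) = S.d g₁ := S.d_mul _ _ hdi
  have hd₀' : E.r e = S.d (S.mul (S.inv g₂) g₁) := by rw [hd₀]; exact h1
  have hfixA : S.act (S.mul (S.inv g₂) g₁) (Pth.ofEdge e) = Pth.ofEdge e :=
    hfix (Pth.ofEdge e) hArng1 hA
  have hresh : S.res (S.mul (S.inv g₂) g₁) e = S.unit (E.s e) := by
    symm
    apply S.res_unique _ e _ hd₀' (S.d_unit _)
    intro ν hν
    have hcr : ((Pth.ofEdge e).concat ν).rng = S.d g₁ := (concat_rng hν).trans h1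
    have heq : S.act g₁ ((Pth.ofEdge e).concat ν) = S.act g₂ ((Pth.ofEdge e).concat ν) := by
      rw [S.res_spec g₁ e ν h1 hν, S.res_spec g₂ e ν h2 hν, hA, hR]
    rw [hfix _ hcr heq, hfixA, S.act_unit _ _ hν]
  have h₀eq := hpf _ e hd₀' hfixA hresh
  have hfin1 : S.mul g₂ (S.mul (S.inv g₂) g₁) = g₁ := by
    rw [← S.mul_assoc g₂ (S.inv g₂) g₁ (S.t_inv g₂).symm hdi, S.mul_inv, ← ht, S.unit_mul]
  have hfin2 : S.mul g₂ (S.mul (S.inv g₂) g₁) = g₂ := by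
    rw [h₀eq, h2, S.mul_unit]
  exact hfin1.symm.trans hfin2

end PFHelpers

/-- Let `(G, E)` be a pseudo free self-similar groupoid action on
the path space of a finite directed graph `E` with no sources (pseudo free: for every
`g ∈ G` and `e ∈ d(g) E¹`, if `g · e = e` and `g|_e = s e` then `g = r e`).  If
`g₁, g₂ ∈ G` and `α ∈ E*` satisfy `d g₁ = d g₂ = r α`, `g₁ · α = g₂ · α` and
`g₁|_α = g₂|_α`, then `g₁ = g₂`.  (Here `g|_μ` (`resP g μ`) denotes the restriction
along a path, the unique element with `d (g|_μ) = s μ` and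
`g · (μ ν) = (g · μ)(g|_μ · ν)`.) -/
theorem selfSimilar_pseudoFree_cancellation {α : Type*} (E : DGraph)
    [Fintype E.V] [Fintype E.Edge] (hns : ∀ v : E.V, ∃ e : E.Edge, E.r e = v)
    (S : SelfSimilar E α) (resP : α → Pth E → α)
    (hres_d : ∀ g μ, μ.rng = S.d g → S.d (resP g μ) = μ.src)
    (hres_spec : ∀ g μ ν, μ.rng = S.d g → ν.rng = μ.src →
        S.act g (μ.concat ν) = (S.act g μ).concat (S.act (resP g μ) ν))
    (hpf : ∀ (g : α) (e : E.Edge), E.r e = S.d g →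
        S.act g (Pth.ofEdge e) = Pth.ofEdge e → S.res g e = S.unit (E.s e) →
        g = S.unit (E.r e)) :
    ∀ (g₁ g₂ : α) (μ : Pth E), S.d g₁ = μ.rng → S.d g₂ = μ.rng →
      S.act g₁ μ = S.act g₂ μ → resP g₁ μ = resP g₂ μ → g₁ = g₂ := by
  suffices key : ∀ (l : List E.Edge) (v w : E.V) (hch : E.chain v l w) (g₁ g₂ : α),
      S.d g₁ = v → S.d g₂ = v →
      S.act g₁ ⟨v, l, w, hch⟩ = S.act g₂ ⟨v, l, w, hch⟩ →
      resP g₁ ⟨v, l, w, hch⟩ = resP g₂ ⟨v, l, w, hch⟩ → g₁ = g₂ by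
    intro g₁ g₂ μ h1 h2 h3 h4
    obtain ⟨v, l, w, hch⟩ := μ
    exact key l v w hch g₁ g₂ h1 h2 h3 h4
  intro l
  induction l with
  | nil =>
    intro v w hch g₁ g₂ hd1 hd2 hact hres
    have hvw : v = w := hch
    subst hvw
    have hμ : (⟨v, [], v, hch⟩ : Pth E) = Pth.ofVertex v := rfl
    rw [hμ] at hact hres
    apply S.faithful g₁ g₂ (hd1.trans hd2.symm)
    intro ν hν
    have hν' : ν.rng = v := hν.trans hd1
    have e1 := hres_spec g₁ (Pth.ofVertex v) ν hd1.symm hν'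
    have e2 := hres_spec g₂ (Pth.ofVertex v) ν hd2.symm hν'
    rw [vertex_concat hν'] at e1 e2
    rw [e1, e2, hact, hres]
  | cons e l ih =>
    intro v w hch g₁ g₂ hd1 hd2 hact hres
    have hev : E.r e = v := hch.1
    subst hev
    have hch' : E.chain (E.s e) l w := hch.2
    have h1 : E.r e = S.d g₁ := hd1.symm
    have h2 : E.r e = S.d g₂ := hd2.symm
    set μ : Pth E := ⟨E.r e, e :: l, w, hch⟩ with hμdef
    set μ' : Pth E := ⟨E.s e, l, w, hch'⟩ with hμ'def
    have hcond1 : μ'.rng = (Pth.ofEdge e).src := rfl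
    have hdec : μ = (Pth.ofEdge e).concat μ' :=
      pth_ext (concat_rng hcond1).symm (concat_edges hcond1).symm
    by_cases hl : l = []
    · subst hl
      have hw : E.s e = w := hch'
      subst hw
      have hμA : μ = Pth.ofEdge e := rfl
      have hrp1 : resP g₁ μ = S.res g₁ e := by
        apply S.res_unique g₁ e _ h1 (hres_d g₁ μ hd1.symm)
        intro ν hν
        exact hres_spec g₁ μ ν hd1.symm hν
      have hrp2 : resP g₂ μ = S.res g₂ e := by
        apply S.res_unique g₂ e _ h2 (hres_d g₂ μ hd2.symm)
        intro ν hν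
        exact hres_spec g₂ μ ν hd2.symm hν
      have hR : S.res g₁ e = S.res g₂ e := by rw [← hrp1, ← hrp2]; exact hres
      have hAeq : S.act g₁ (Pth.ofEdge e) = S.act g₂ (Pth.ofEdge e) := by
        rw [← hμA]; exact hact
      exact edge_cancel S hpf g₁ g₂ e h1 h2 hAeq hR
    · have htrans : ∀ g : α, E.r e = S.d g → ∃ e' : E.Edge,
          S.act g (Pth.ofEdge e) = Pth.ofEdge e' ∧
          (S.act (S.res g e) μ').rng = (Pth.ofEdge e').src ∧
          resP g μ = resP (S.res g e) μ' := by
        intro g hg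
        obtain ⟨e', he'r, he'⟩ := act_ofEdge S g e hg
        have hkd : S.d (S.res g e) = E.s e := S.res_d g e hg
        have hkd' : μ'.rng = S.d (S.res g e) := hkd.symm
        have bdec : S.act g μ = (S.act g (Pth.ofEdge e)).concat (S.act (S.res g e) μ') := by
          rw [hdec]; exact S.res_spec g e μ' hg rfl
        have hBlen : (S.act (S.res g e) μ').edges.length = l.length := S.act_len _ μ' hkd'
        have hBne : (S.act (S.res g e) μ').edges ≠ [] := by
          intro h0; rw [h0] at hBlen
          exact hl (List.length_eq_zero_iff.mp hBlen.symm)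
        have hcondB : (S.act (S.res g e) μ').rng = (Pth.ofEdge e').src := by
          apply cond_of ?_ hBne
          rw [← he', ← bdec, S.act_len g μ hg, S.act_len g (Pth.ofEdge e) hg, hBlen]
          simp [Pth.ofEdge, hμdef]
          omega
        refine ⟨e', he', hcondB, ?_⟩
        have hdeq : S.d (resP g μ) = S.d (resP (S.res g e) μ') :=
          (hres_d g μ hg).trans (hres_d (S.res g e) μ' hkd').symm
        apply faithful_of_nonempty S hns _ _ hdeq
        intro ν hν hνne
        have hνsrc : ν.rng = μ.src := hν.trans (hres_d g μ hg)
        have hνsrc' : ν.rng = μ'.src := hνsrc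
        have hν2 : ν.rng = S.d (resP (S.res g e) μ') := hν.trans hdeq
        have E1 : S.act g (μ.concat ν) = (S.act g μ).concat (S.act (resP g μ) ν) :=
          hres_spec g μ ν hg hνsrc
        have hassoc : μ.concat ν = (Pth.ofEdge e).concat (μ'.concat ν) := by
          rw [hdec]; exact concat_assoc hcond1 hνsrc'
        have E2 : S.act g ((Pth.ofEdge e).concat (μ'.concat ν)) =
            (S.act g (Pth.ofEdge e)).concat (S.act (S.res g e) (μ'.concat ν)) :=
          S.res_spec g e (μ'.concat ν) hg (concat_rng hνsrc')
        have E3 : S.act (S.res g e) (μ'.concat ν) =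
            (S.act (S.res g e) μ').concat (S.act (resP (S.res g e) μ') ν) :=
          hres_spec (S.res g e) μ' ν hkd' hνsrc'
        have hXlen : (S.act (resP g μ) ν).edges.length = ν.edges.length :=
          S.act_len _ ν hν
        have hXne : (S.act (resP g μ) ν).edges ≠ [] := by
          intro h0; rw [h0] at hXlen
          exact hνne (List.length_eq_zero_iff.mp hXlen.symm)
        have hYlen : (S.act (resP (S.res g e) μ') ν).edges.length = ν.edges.length :=
          S.act_len _ ν hν2
        have hYne : (S.act (resP (S.res g e) μ') ν).edges ≠ [] := by
          intro h0; rw [h0] at hYlen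
          exact hνne (List.length_eq_zero_iff.mp hYlen.symm)
        have condX : (S.act (resP g μ) ν).rng = (S.act g μ).src := by
          apply cond_of ?_ hXne
          rw [← E1, S.act_len g (μ.concat ν) ((concat_rng hνsrc).trans hg),
            concat_edges hνsrc, List.length_append, S.act_len g μ hg, hXlen]
        have condY : (S.act (resP (S.res g e) μ') ν).rng = (S.act (S.res g e) μ').src := by
          apply cond_of ?_ hYne
          rw [← E3, S.act_len (S.res g e) (μ'.concat ν) ((concat_rng hνsrc').trans hkd.symm),
            concat_edges hνsrc', List.length_append, hBlen, hYlen]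
        have condX' : (S.act (resP g μ) ν).rng = (S.act (S.res g e) μ').src := by
          rw [condX, bdec, he', concat_src hcondB]
        have BIG : (S.act g μ).concat (S.act (resP g μ) ν) =
            (S.act g (Pth.ofEdge e)).concat
              ((S.act (S.res g e) μ').concat (S.act (resP (S.res g e) μ') ν)) := by
          rw [← E1, hassoc, E2, E3]
        rw [bdec, he', concat_assoc hcondB condX'] at BIG
        have hcXr : ((S.act (S.res g e) μ').concat (S.act (resP g μ) ν)).rng =
            (Pth.ofEdge e').src := by rw [concat_rng condX']; exact hcondB
        have hcYr : ((S.act (S.res g e) μ').concat (S.act (resP (S.res g e) μ') ν)).rng =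
            (Pth.ofEdge e').src := by rw [concat_rng condY]; exact hcondB
        have hed := congrArg Pth.edges BIG
        rw [concat_edges hcXr, concat_edges hcYr, concat_edges condX', concat_edges condY]
          at hed
        have hed' : (S.act (resP g μ) ν).edges = (S.act (resP (S.res g e) μ') ν).edges := by
          have := List.append_cancel_left hed
          exact List.append_cancel_left this
        exact pth_ext (condX'.trans condY.symm) hed'
      obtain ⟨e₁', he₁, hcondB1, hT1⟩ := htrans g₁ h1
      obtain ⟨e₂', he₂, hcondB2, hT2⟩ := htrans g₂ h2
      have bdec1 : S.act g₁ μ = (S.act g₁ (Pth.ofEdge e)).concat (S.act (S.res g₁ e) μ') := by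
        rw [hdec]; exact S.res_spec g₁ e μ' h1 rfl
      have bdec2 : S.act g₂ μ = (S.act g₂ (Pth.ofEdge e)).concat (S.act (S.res g₂ e) μ') := by
        rw [hdec]; exact S.res_spec g₂ e μ' h2 rfl
      have hedges1 : (S.act g₁ μ).edges = e₁' :: (S.act (S.res g₁ e) μ').edges := by
        rw [bdec1, he₁, concat_edges hcondB1]; rfl
      have hedges2 : (S.act g₂ μ).edges = e₂' :: (S.act (S.res g₂ e) μ').edges := by
        rw [bdec2, he₂, concat_edges hcondB2]; rfl
      have hE : e₁' :: (S.act (S.res g₁ e) μ').edges = e₂' :: (S.act (S.res g₂ e) μ').edges := by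
        rw [← hedges1, ← hedges2, hact]
      injection hE with hh htl
      have hA' : S.act (S.res g₁ e) μ' = S.act (S.res g₂ e) μ' :=
        pth_ext (by rw [hcondB1, hcondB2, hh]) htl
      have hR' : resP (S.res g₁ e) μ' = resP (S.res g₂ e) μ' := by
        rw [← hT1, ← hT2]; exact hres
      have hkeq : S.res g₁ e = S.res g₂ e :=
        ih (E.s e) w hch' (S.res g₁ e) (S.res g₂ e) (S.res_d g₁ e h1) (S.res_d g₂ e h2) hA' hR'
      have hAeq : S.act g₁ (Pth.ofEdge e) = S.act g₂ (Pth.ofEdge e) := by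
        rw [he₁, he₂, hh]
      exact edge_cancel S hpf g₁ g₂ e h1 h2 hAeq hkeq
end
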